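/- Let L be a diffusion generator Lf = b·∇f + ∇·(D∇f) with constant positive-semidefinite diffusion matrix D, and let C₁, C₂ be linear operators. For Φ(f) = C₁f · C₂f, the generalized Γ operator Γ_Φ(f) := (1/2)(LΦ(f) − dΦ(f)·Lf) satisfies Γ_Φ(f) = Γ₁(C₁f, C₂f) + (1/2) C₁f·[L,C₂]f + (1/2)[L,C₁]f·C₂f, where Γ₁ is the carré du champ of L. -/

import Mathlib

open scoped RealInnerProductSpace

noncomputable section

/-- Diffusion generator `Lf = b·∇f + ∇·(D∇f)` with constant diffusion matrix `D`. -/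
def Lgen (n : ℕ) (b : EuclideanSpace ℝ (Fin n) → EuclideanSpace ℝ (Fin n))
    (Dm : Matrix (Fin n) (Fin n) ℝ) (f : EuclideanSpace ℝ (Fin n) → ℝ)
    (x : EuclideanSpace ℝ (Fin n)) : ℝ :=
  ⟪b x, gradient f x⟫ + ∑ i : Fin n, ∑ j : Fin n,
    Dm i j * iteratedFDeriv ℝ 2 f x ![EuclideanSpace.single i 1, EuclideanSpace.single j 1]

/-- Carré du champ `Γ₁(f,g) = (∇f)ᵀ D ∇g`. -/
def carre (n : ℕ) (Dm : Matrix (Fin n) (Fin n) ℝ)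
    (f g : EuclideanSpace ℝ (Fin n) → ℝ) (x : EuclideanSpace ℝ (Fin n)) : ℝ :=
  ∑ i : Fin n, ∑ j : Fin n,
    Dm i j * fderiv ℝ f x (EuclideanSpace.single i 1) * fderiv ℝ g x (EuclideanSpace.single j 1)

lemma inner_grad (n : ℕ) (f : EuclideanSpace ℝ (Fin n) → ℝ) (x v : EuclideanSpace ℝ (Fin n)) :
    ⟪v, gradient f x⟫ = fderiv ℝ f x v := by
  rw [real_inner_comm, gradient, InnerProductSpace.toDual_symm_apply]

lemma second_mul (n : ℕ) (u v : EuclideanSpace ℝ (Fin n) → ℝ)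
    (hu : ContDiff ℝ 2 u) (hv : ContDiff ℝ 2 v) (x a c : EuclideanSpace ℝ (Fin n)) :
    fderiv ℝ (fderiv ℝ (fun y => u y * v y)) x a c
      = u x * fderiv ℝ (fderiv ℝ v) x a c + v x * fderiv ℝ (fderiv ℝ u) x a c
        + fderiv ℝ u x a * fderiv ℝ v x c + fderiv ℝ u x c * fderiv ℝ v x a := by
  have hdu : Differentiable ℝ u := hu.differentiable (by norm_num)
  have hdv : Differentiable ℝ v := hv.differentiable (by norm_num)
  have hdu' : Differentiable ℝ (fderiv ℝ u) :=
    (hu.fderiv_right (m := 1) (by norm_num)).differentiable (by norm_num)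
  have hdv' : Differentiable ℝ (fderiv ℝ v) :=
    (hv.fderiv_right (m := 1) (by norm_num)).differentiable (by norm_num)
  have h1 : fderiv ℝ (fun y => u y * v y)
      = fun y => u y • fderiv ℝ v y + v y • fderiv ℝ u y := by
    funext y
    simpa [smul_smul] using fderiv_fun_mul (hdu y) (hdv y)
  rw [h1]
  have h2 : fderiv ℝ (fun y => u y • fderiv ℝ v y + v y • fderiv ℝ u y) x
      = (u x • fderiv ℝ (fderiv ℝ v) x + (fderiv ℝ u x).smulRight (fderiv ℝ v x))
        + (v x • fderiv ℝ (fderiv ℝ u) x + (fderiv ℝ v x).smulRight (fderiv ℝ u x)) := by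
    rw [fderiv_fun_add (f := fun y => u y • fderiv ℝ v y) (g := fun y => v y • fderiv ℝ u y) ((hdu x).smul (hdv' x)) ((hdv x).smul (hdu' x)),
      fderiv_fun_smul (hdu x) (hdv' x), fderiv_fun_smul (hdv x) (hdu' x)]
  rw [h2]
  simp [ContinuousLinearMap.smulRight_apply, smul_eq_mul]
  ring

lemma Lgen_mul (n : ℕ) (b : EuclideanSpace ℝ (Fin n) → EuclideanSpace ℝ (Fin n))
    (Dm : Matrix (Fin n) (Fin n) ℝ) (hsym : ∀ i j, Dm j i = Dm i j)
    (u v : EuclideanSpace ℝ (Fin n) → ℝ)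
    (hu : ContDiff ℝ 2 u) (hv : ContDiff ℝ 2 v) (x : EuclideanSpace ℝ (Fin n)) :
    Lgen n b Dm (fun y => u y * v y) x
      = u x * Lgen n b Dm v x + v x * Lgen n b Dm u x + 2 * carre n Dm u v x := by
  have hdu : Differentiable ℝ u := hu.differentiable (by norm_num)
  have hdv : Differentiable ℝ v := hv.differentiable (by norm_num)
  unfold Lgen carre
  have hgrad : ⟪b x, gradient (fun y => u y * v y) x⟫
      = u x * ⟪b x, gradient v x⟫ + v x * ⟪b x, gradient u x⟫ := by
    rw [inner_grad, inner_grad, inner_grad, fderiv_fun_mul (hdu x) (hdv x)]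
    simp [mul_comm]
  have hsec : ∀ i j : Fin n,
      iteratedFDeriv ℝ 2 (fun y => u y * v y) x
        ![EuclideanSpace.single i 1, EuclideanSpace.single j 1]
      = u x * iteratedFDeriv ℝ 2 v x ![EuclideanSpace.single i 1, EuclideanSpace.single j 1]
        + v x * iteratedFDeriv ℝ 2 u x ![EuclideanSpace.single i 1, EuclideanSpace.single j 1]
        + fderiv ℝ u x (EuclideanSpace.single i 1) * fderiv ℝ v x (EuclideanSpace.single j 1)
        + fderiv ℝ u x (EuclideanSpace.single j 1) * fderiv ℝ v x (EuclideanSpace.single i 1) := by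
    intro i j
    rw [iteratedFDeriv_two_apply, iteratedFDeriv_two_apply, iteratedFDeriv_two_apply]
    exact second_mul n u v hu hv x _ _
  have key : ∑ i : Fin n, ∑ j : Fin n, Dm i j *
      iteratedFDeriv ℝ 2 (fun y => u y * v y) x
        ![EuclideanSpace.single i 1, EuclideanSpace.single j 1]
      = ∑ i : Fin n, ∑ j : Fin n,
        (u x * (Dm i j * iteratedFDeriv ℝ 2 v x
            ![EuclideanSpace.single i 1, EuclideanSpace.single j 1])
        + v x * (Dm i j * iteratedFDeriv ℝ 2 u x
            ![EuclideanSpace.single i 1, EuclideanSpace.single j 1])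
        + Dm i j * fderiv ℝ u x (EuclideanSpace.single i 1) *
            fderiv ℝ v x (EuclideanSpace.single j 1)
        + Dm i j * (fderiv ℝ u x (EuclideanSpace.single j 1) *
            fderiv ℝ v x (EuclideanSpace.single i 1))) := by
    refine Finset.sum_congr rfl fun i _ => Finset.sum_congr rfl fun j _ => ?_
    rw [hsec i j]; ring
  have hswap : ∑ i : Fin n, ∑ j : Fin n,
      Dm i j * (fderiv ℝ u x (EuclideanSpace.single j 1) * fderiv ℝ v x (EuclideanSpace.single i 1))
      = ∑ i : Fin n, ∑ j : Fin n,
      Dm i j * fderiv ℝ u x (EuclideanSpace.single i 1) * fderiv ℝ v x (EuclideanSpace.single j 1) := by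
    rw [Finset.sum_comm]
    refine Finset.sum_congr rfl fun i _ => Finset.sum_congr rfl fun j _ => ?_
    rw [hsym i j]; ring
  rw [hgrad, key]
  simp only [Finset.sum_add_distrib, ← Finset.mul_sum]
  rw [hswap]
  ring

/-- For `Φ(f) = C₁f · C₂f` with `C₁, C₂` linear operators, the generalized Γ operator
`Γ_Φ(f) = (1/2)(LΦ(f) − dΦ(f)·Lf)` (with `dΦ(f)·g = C₁f·C₂g + C₁g·C₂f`) equals
`Γ₁(C₁f, C₂f) + (1/2) C₁f·[L,C₂]f + (1/2)[L,C₁]f·C₂f`. -/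
theorem gammaPhi_product
    (n : ℕ) (b : EuclideanSpace ℝ (Fin n) → EuclideanSpace ℝ (Fin n))
    (Dm : Matrix (Fin n) (Fin n) ℝ) (hD : Dm.PosSemidef)
    (C₁ C₂ : (EuclideanSpace ℝ (Fin n) → ℝ) →ₗ[ℝ] (EuclideanSpace ℝ (Fin n) → ℝ))
    (f : EuclideanSpace ℝ (Fin n) → ℝ)
    (hf : ContDiff ℝ 2 f) (hC₁f : ContDiff ℝ 2 (C₁ f)) (hC₂f : ContDiff ℝ 2 (C₂ f)) :
    ∀ x,
      (1 / 2) * (Lgen n b Dm (fun y => C₁ f y * C₂ f y) x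
          - (C₁ f x * C₂ (Lgen n b Dm f) x + C₁ (Lgen n b Dm f) x * C₂ f x))
      = carre n Dm (C₁ f) (C₂ f) x
          + (1 / 2) * (C₁ f x * (Lgen n b Dm (C₂ f) x - C₂ (Lgen n b Dm f) x))
          + (1 / 2) * ((Lgen n b Dm (C₁ f) x - C₁ (Lgen n b Dm f) x) * C₂ f x) := by
  intro x
  have hsym : ∀ i j, Dm j i = Dm i j := fun i j => hD.isHermitian.apply i j
  rw [Lgen_mul n b Dm hsym (C₁ f) (C₂ f) hC₁f hC₂f x]
  ring
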